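/- Suppose for every compact K ⊂ Σ ⊂ ℝ^d, the Lipschitz function T : ℝ^d → ℝ satisfies limsup_{x,y ∈ K, |x-y|→0} |T(x)-T(y)|/|x-y| = 0, and Σ is contained in countably many C¹ hypersurfaces. Then for almost every t, the level set Σ ∩ T^{-1}(t) has zero (d-2)-dimensional Hausdorff measure, provided Σ^{d-2}-type strata contribute to positive measure for at most countably many t. -/

import Mathlib

open MeasureTheory Metric Set
open scoped MeasureTheory

open ENNReal
open scoped NNReal RealInnerProductSpace

set_option maxHeartbeats 1000000
set_option linter.unusedSectionVars false

variable {X : Type*} [MetricSpace X] [MeasurableSpace X] [BorelSpace X]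

/-- pre-Hausdorff content at scale `r`. -/
noncomputable def preH (s : ℝ) (r : ℝ≥0∞) (B : Set X) : ℝ≥0∞ :=
  ⨅ (t : ℕ → Set X) (_ : B ⊆ ⋃ n, t n) (_ : ∀ n, EMetric.diam (t n) ≤ r),
    ∑' n, ⨆ _ : (t n).Nonempty, EMetric.diam (t n) ^ s

theorem hausdorff_eq_iSup_preH (s : ℝ) (B : Set X) :
    μH[s] B = ⨆ (r : ℝ≥0∞) (_ : 0 < r), preH s r B := by
  rw [MeasureTheory.Measure.hausdorffMeasure_apply]
  rfl

theorem preH_le_hausdorff {s : ℝ} {r : ℝ≥0∞} (hr : 0 < r) (B : Set X) :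
    preH s r B ≤ μH[s] B := by
  rw [hausdorff_eq_iSup_preH]
  exact le_iSup₂ (f := fun r (_ : 0 < r) => preH s r B) r hr

theorem preH_anti {s : ℝ} {r r' : ℝ≥0∞} (h : r ≤ r') (B : Set X) :
    preH s r' B ≤ preH s r B := by
  refine le_iInf fun t => le_iInf fun ht => le_iInf fun htr => ?_
  exact iInf₂_le_of_le t ht (iInf_le_of_le (fun n => (htr n).trans h) le_rfl)

theorem preH_mono {s : ℝ} {r : ℝ≥0∞} {B B' : Set X} (h : B ⊆ B') :
    preH s r B ≤ preH s r B' := by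
  refine le_iInf fun t => le_iInf fun ht => le_iInf fun htr => ?_
  exact iInf₂_le_of_le t (h.trans ht) (iInf_le_of_le htr le_rfl)


theorem eilenberg_step [Nonempty X] {s : ℝ} (hs : 0 ≤ s) (A : Set X) (T : X → ℝ)
    {ε r0 : ℝ} (hε : 0 < ε) (hr0 : 0 < r0)
    (hA : ∀ x ∈ A, ∀ y ∈ A, dist x y < r0 → |T x - T y| ≤ ε * dist x y)
    {r : ℝ≥0∞} (hr : 0 < r) (hr' : r < ENNReal.ofReal r0)
    (a η : ℝ≥0∞) (hη : 0 < η) :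
    a * volume {t : ℝ | a < preH s r (A ∩ T ⁻¹' {t})} ≤
      2 * ENNReal.ofReal ε * (preH (s + 1) r A + η) := by
  classical
  by_cases hP : preH (s + 1) r A = ∞
  · rw [hP]
    have h2 : (2 : ℝ≥0∞) * ENNReal.ofReal ε ≠ 0 := by
      simp [ENNReal.ofReal_eq_zero, not_le.mpr hε]
    rw [top_add, ENNReal.mul_top h2]
    exact le_top
  -- extract a near-optimal cover
  have hlt : preH (s + 1) r A < preH (s + 1) r A + η :=
    ENNReal.lt_add_right hP hη.ne'
  conv at hlt => lhs; rw [preH]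
  simp only [iInf_lt_iff] at hlt
  obtain ⟨c0, hc0cov, hc0diam, hc0sum⟩ := hlt
  set c : ℕ → Set X := fun n => c0 n ∩ A with hc
  have hccov : A ⊆ ⋃ n, c n := by
    intro x hx
    rcases mem_iUnion.1 (hc0cov hx) with ⟨n, hn⟩
    exact mem_iUnion.2 ⟨n, hn, hx⟩
  have hcdiam : ∀ n, EMetric.diam (c n) ≤ r := fun n =>
    (EMetric.diam_mono inter_subset_left).trans (hc0diam n)
  have hcsum : (∑' n, ⨆ _ : (c n).Nonempty, EMetric.diam (c n) ^ (s + 1)) <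
      preH (s + 1) r A + η := by
    refine lt_of_le_of_lt ?_ hc0sum
    refine ENNReal.tsum_le_tsum fun n => ?_
    refine iSup_le fun hne => ?_
    refine le_iSup_of_le (hne.mono inter_subset_left) ?_
    exact ENNReal.rpow_le_rpow (EMetric.diam_mono inter_subset_left) (by linarith)
  have hcA : ∀ n, c n ⊆ A := fun n => inter_subset_right
  have hcdiam_ne : ∀ n, EMetric.diam (c n) ≠ ∞ := fun n =>
    (((hcdiam n).trans_lt hr').trans ENNReal.ofReal_lt_top).ne
  -- choose points and intervals
  set x : ℕ → X := fun n => if h : (c n).Nonempty then h.some else Classical.arbitrary X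
    with hx
  set dn : ℕ → ℝ := fun n => (EMetric.diam (c n)).toReal with hdn
  set I : ℕ → Set ℝ := fun n => Icc (T (x n) - ε * dn n) (T (x n) + ε * dn n) with hI
  set g : ℕ → ℝ≥0∞ := fun n => ⨆ _ : (c n).Nonempty, EMetric.diam (c n) ^ s with hg
  set h : ℝ → ℝ≥0∞ := fun t => ∑' n, (I n).indicator (fun _ => g n) t with hh
  have hmeas : Measurable h :=
    Measurable.ennreal_tsum fun n => Measurable.indicator measurable_const measurableSet_Icc
  -- pointwise bound for fibers
  have claim1 : ∀ t : ℝ, preH s r (A ∩ T ⁻¹' {t}) ≤ h t := by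
    intro t
    set u : ℕ → Set X := fun n => c n ∩ T ⁻¹' {t} with hu
    have hucov : A ∩ T ⁻¹' {t} ⊆ ⋃ n, u n := by
      rintro z ⟨hzA, hzT⟩
      rcases mem_iUnion.1 (hccov hzA) with ⟨n, hn⟩
      exact mem_iUnion.2 ⟨n, hn, hzT⟩
    have hudiam : ∀ n, EMetric.diam (u n) ≤ r := fun n =>
      (EMetric.diam_mono inter_subset_left).trans (hcdiam n)
    refine le_trans (iInf₂_le_of_le u hucov (iInf_le_of_le hudiam le_rfl)) ?_
    refine ENNReal.tsum_le_tsum fun n => ?_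
    refine iSup_le fun hne => ?_
    obtain ⟨z, hzc, hzT⟩ := hne
    have hTzt : T z = t := hzT
    have hcne : (c n).Nonempty := ⟨z, hzc⟩
    have hxn : x n ∈ c n := by
      rw [hx]; simp only [dif_pos hcne]; exact hcne.some_mem
    have hzd : dist z (x n) ≤ dn n := by
      rw [hdn, ← ENNReal.toReal_ofReal (dist_nonneg (x := z) (y := x n))]
      refine ENNReal.toReal_mono (hcdiam_ne n) ?_
      rw [← edist_dist]
      exact EMetric.edist_le_diam_of_mem hzc hxn
    have hzr0 : dist z (x n) < r0 := by
      have h1 : edist z (x n) < ENNReal.ofReal r0 :=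
        lt_of_le_of_lt ((EMetric.edist_le_diam_of_mem hzc hxn).trans (hcdiam n)) hr'
      rwa [edist_dist, ENNReal.ofReal_lt_ofReal_iff hr0] at h1
    have hTz : |T z - T (x n)| ≤ ε * dn n := by
      refine (hA z (hcA n hzc) (x n) (hcA n hxn) hzr0).trans ?_
      exact mul_le_mul_of_nonneg_left hzd hε.le
    have htI : t ∈ I n := by
      rw [hI]
      simp only [mem_Icc]
      cases' abs_le.1 hTz with h1 h2
      constructor <;> linarith
    refine le_trans (ENNReal.rpow_le_rpow (EMetric.diam_mono inter_subset_left) hs) ?_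
    rw [Set.indicator_of_mem htI]
    simp only [hg, iSup_pos hcne, le_refl]
    exact le_rfl
  -- integral bound
  have claim2 : (∫⁻ t, h t) ≤ 2 * ENNReal.ofReal ε * (preH (s + 1) r A + η) := by
    rw [hh, lintegral_tsum fun n =>
      (Measurable.indicator measurable_const measurableSet_Icc).aemeasurable]
    have hterm : ∀ n, (∫⁻ t, (I n).indicator (fun _ => g n) t) ≤
        2 * ENNReal.ofReal ε * ⨆ _ : (c n).Nonempty, EMetric.diam (c n) ^ (s + 1) := by
      intro n
      rw [lintegral_indicator_const measurableSet_Icc]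
      by_cases hcne : (c n).Nonempty
      · have hdnn : 0 ≤ dn n := ENNReal.toReal_nonneg
        have hvol : volume (I n) = ENNReal.ofReal (2 * (ε * dn n)) := by
          rw [hI]
          simp only [Real.volume_Icc]
          ring_nf
        rw [hvol]
        simp only [hg, iSup_pos hcne]
        have hab : ENNReal.ofReal (2 * (ε * dn n)) =
            2 * ENNReal.ofReal ε * ENNReal.ofReal (dn n) := by
          rw [ENNReal.ofReal_mul (by norm_num), ENNReal.ofReal_mul hε.le]
          norm_num [mul_assoc]
        rw [hab, ENNReal.ofReal_toReal (hcdiam_ne n)]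
        rw [ENNReal.rpow_add_of_nonneg s 1 hs zero_le_one, ENNReal.rpow_one]
        ring_nf
        exact le_rfl
      · rw [hg]
        simp [hcne]
    refine le_trans (ENNReal.tsum_le_tsum hterm) ?_
    rw [ENNReal.tsum_mul_left]
    exact mul_le_mul_right hcsum.le _
  -- Chebyshev
  have hsub : {t : ℝ | a < preH s r (A ∩ T ⁻¹' {t})} ⊆ {t : ℝ | a ≤ h t} :=
    fun t ht => le_trans (le_of_lt ht) (claim1 t)
  calc a * volume {t : ℝ | a < preH s r (A ∩ T ⁻¹' {t})}
      ≤ a * volume {t : ℝ | a ≤ h t} := mul_le_mul_right (measure_mono hsub) a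
    _ ≤ ∫⁻ t, h t := mul_meas_ge_le_lintegral hmeas a
    _ ≤ 2 * ENNReal.ofReal ε * (preH (s + 1) r A + η) := claim2

theorem eilenberg [Nonempty X] {s : ℝ} (hs : 0 ≤ s) (A : Set X) (T : X → ℝ)
    {ε r0 : ℝ} (hε : 0 < ε) (hr0 : 0 < r0)
    (hA : ∀ x ∈ A, ∀ y ∈ A, dist x y < r0 → |T x - T y| ≤ ε * dist x y)
    (a : ℝ≥0∞) :
    a * volume {t : ℝ | a < μH[s] (A ∩ T ⁻¹' {t})} ≤
      2 * ENNReal.ofReal ε * μH[s + 1] A := by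
  set r : ℕ → ℝ≥0∞ := fun j => min (ENNReal.ofReal r0 / 2) ((j : ℝ≥0∞) + 1)⁻¹ with hrdef
  have hr0e : (0 : ℝ≥0∞) < ENNReal.ofReal r0 := ENNReal.ofReal_pos.2 hr0
  have hrpos : ∀ j, 0 < r j := fun j => by
    refine lt_min (ENNReal.div_pos hr0e.ne' (by norm_num)) ?_
    exact ENNReal.inv_pos.2 (by simp)
  have hrlt : ∀ j, r j < ENNReal.ofReal r0 := fun j =>
    (min_le_left _ _).trans_lt (ENNReal.half_lt_self hr0e.ne' ENNReal.ofReal_ne_top)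
  have hranti : Antitone r := fun i j hij => by
    refine le_min (min_le_left _ _) ((min_le_right _ _).trans ?_)
    refine ENNReal.inv_le_inv.2 ?_
    have : (i : ℝ≥0∞) ≤ (j : ℝ≥0∞) := by exact_mod_cast hij
    gcongr
  set Bad : ℕ → Set ℝ := fun j => {t : ℝ | a < preH s (r j) (A ∩ T ⁻¹' {t})} with hBad
  have hmono : Monotone Bad := fun i j hij t ht =>
    lt_of_lt_of_le ht (preH_anti (hranti hij) _)
  have hcup : {t : ℝ | a < μH[s] (A ∩ T ⁻¹' {t})} = ⋃ j, Bad j := by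
    ext t
    simp only [mem_setOf_eq, mem_iUnion, hBad]
    constructor
    · intro ht
      rw [hausdorff_eq_iSup_preH] at ht
      rw [lt_iSup_iff] at ht
      obtain ⟨r', hr'⟩ := ht
      rw [lt_iSup_iff] at hr'
      obtain ⟨hr'pos, hlt⟩ := hr'
      obtain ⟨n, hn⟩ := ENNReal.exists_inv_nat_lt hr'pos.ne'
      refine ⟨n, lt_of_lt_of_le hlt (preH_anti ?_ _)⟩
      refine (min_le_right _ _).trans (le_trans ?_ hn.le)
      exact ENNReal.inv_le_inv.2 (by norm_num)
    · rintro ⟨j, hj⟩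
      exact lt_of_lt_of_le hj (preH_le_hausdorff (hrpos j) _)
  rw [hcup, hmono.measure_iUnion, ENNReal.mul_iSup]
  refine iSup_le fun j => ?_
  refine ENNReal.le_of_forall_pos_le_add fun δ hδ _ => ?_
  have hbne : (2 : ℝ≥0∞) * ENNReal.ofReal ε ≠ 0 := by
    simp [ENNReal.ofReal_eq_zero, not_le.mpr hε]
  have hbtop : (2 : ℝ≥0∞) * ENNReal.ofReal ε ≠ ∞ :=
    ENNReal.mul_ne_top (by norm_num) ENNReal.ofReal_ne_top
  have hηpos : (0 : ℝ≥0∞) < (δ : ℝ≥0∞) / (2 * ENNReal.ofReal ε) :=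
    ENNReal.div_pos (by exact_mod_cast hδ.ne') hbtop
  calc a * volume (Bad j)
      ≤ 2 * ENNReal.ofReal ε *
        (preH (s + 1) (r j) A + (δ : ℝ≥0∞) / (2 * ENNReal.ofReal ε)) :=
        eilenberg_step hs A T hε hr0 hA (hrpos j) (hrlt j) a _ hηpos
    _ ≤ 2 * ENNReal.ofReal ε *
        (μH[s + 1] A + (δ : ℝ≥0∞) / (2 * ENNReal.ofReal ε)) := by
        gcongr
        exact preH_le_hausdorff (hrpos j) A
    _ = 2 * ENNReal.ofReal ε * μH[s + 1] A +
        2 * ENNReal.ofReal ε * ((δ : ℝ≥0∞) / (2 * ENNReal.ofReal ε)) := mul_add _ _ _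
    _ ≤ 2 * ENNReal.ofReal ε * μH[s + 1] A + δ := by
        gcongr
        exact ENNReal.mul_div_le

theorem zeroset_locfin {d : ℕ} (hd : 1 ≤ d) (f : EuclideanSpace ℝ (Fin d) → ℝ)
    (hf : ContDiff ℝ 1 f) (x : EuclideanSpace ℝ (Fin d)) (hdf : fderiv ℝ f x ≠ 0) :
    ∃ r > (0:ℝ), μH[(d:ℝ) - 1] ({y | f y = 0} ∩ ball x r) < ∞ := by
  classical
  set L : EuclideanSpace ℝ (Fin d) →L[ℝ] ℝ := fderiv ℝ f x with hL
  have hc : 0 < ‖L‖ := norm_pos_iff.2 hdf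
  set v : EuclideanSpace ℝ (Fin d) := (InnerProductSpace.toDual ℝ _).symm L with hv
  have hvL : ∀ u : EuclideanSpace ℝ (Fin d), ⟪v, u⟫ = L u := fun u =>
    InnerProductSpace.toDual_symm_apply
  have hvnorm : ‖v‖ = ‖L‖ := (InnerProductSpace.toDual ℝ _).symm.norm_map L
  have hvne : v ≠ 0 := by
    intro h
    rw [h, norm_zero] at hvnorm
    exact hc.ne' hvnorm.symm
  have hcont : Continuous (fderiv ℝ f) := hf.continuous_fderiv one_ne_zero
  obtain ⟨r, hrpos, hr⟩ := Metric.continuousAt_iff.1 hcont.continuousAt (‖L‖ / 4)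
    (by positivity)
  have hdiff : ∀ y ∈ ball x r, ∀ z ∈ ball x r, f y = 0 → f z = 0 →
      |L (z - y)| ≤ ‖L‖ / 4 * ‖z - y‖ := by
    intro y hy z hz hfy hfz
    have hbound : ∀ w ∈ ball x r, ‖fderiv ℝ f w - L‖ ≤ ‖L‖ / 4 := by
      intro w hw
      have h1 := hr (mem_ball.1 hw)
      rw [dist_eq_norm] at h1
      exact h1.le
    have hder : ∀ w ∈ ball x r,
        HasFDerivWithinAt (fun u => f u - L u) (fderiv ℝ f w - L) (ball x r) w :=
      fun w _ =>
        ((hf.differentiable one_ne_zero w).hasFDerivAt.sub L.hasFDerivAt).hasFDerivWithinAt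
    have h2 := (convex_ball x r).norm_image_sub_le_of_norm_hasFDerivWithin_le
      hder hbound hy hz
    simp only [hfy, hfz, zero_sub, map_sub] at h2 ⊢
    rw [Real.norm_eq_abs] at h2
    calc |L z - L y| = |-L z - -L y| := by rw [← abs_neg]; ring_nf
      _ ≤ ‖L‖ / 4 * ‖z - y‖ := h2
  set K : Submodule ℝ (EuclideanSpace ℝ (Fin d)) := (ℝ ∙ v)ᗮ with hK
  set P := Submodule.orthogonalProjectionOnto K with hP
  have hanti : ∀ y ∈ ball x r, ∀ z ∈ ball x r, f y = 0 → f z = 0 →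
      ‖z - y‖ ≤ 2 * ‖(P z : K) - P y‖ := by
    intro y hy z hz hfy hfz
    have h1 : |⟪v, z - y⟫| ≤ ‖L‖ / 4 * ‖z - y‖ := by
      rw [hvL]; exact hdiff y hy z hz hfy hfz
    have h2 : ‖z - y‖ ^ 2 =
        ‖Submodule.orthogonalProjectionOnto (ℝ ∙ v) (z - y)‖ ^ 2 + ‖P (z - y)‖ ^ 2 :=
      Submodule.norm_sq_eq_add_norm_sq_projection (z - y) (ℝ ∙ v)
    have h3 : ‖(Submodule.orthogonalProjectionOnto (ℝ ∙ v) (z - y) :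
        EuclideanSpace ℝ (Fin d))‖ * ‖v‖ = |⟪v, z - y⟫| := by
      have hvnz : ‖v‖ ≠ 0 := norm_ne_zero_iff.2 hvne
      rw [Submodule.coe_orthogonalProjectionOnto_apply, Submodule.starProjection_singleton, norm_smul, Real.norm_eq_abs, abs_div]
      simp only [RCLike.ofReal_real_eq_id, id_eq]
      rw [abs_of_nonneg (sq_nonneg ‖v‖)]
      field_simp
    have hLnz : ‖L‖ ≠ 0 := hc.ne'
    have h4 : ‖(Submodule.orthogonalProjectionOnto (ℝ ∙ v) (z - y) :
        EuclideanSpace ℝ (Fin d))‖ ≤ ‖z - y‖ / 4 := by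
      rw [hvnorm] at h3
      have : ‖(Submodule.orthogonalProjectionOnto (ℝ ∙ v) (z - y) :
          EuclideanSpace ℝ (Fin d))‖ * ‖L‖ ≤ ‖L‖ / 4 * ‖z - y‖ := h3.le.trans h1
      rw [le_div_iff₀ (by norm_num : (0:ℝ) < 4), ← mul_le_mul_iff_left₀ hc]
      nlinarith [this]
    have h5 : ‖P (z - y)‖ = ‖(P z : K) - P y‖ := by rw [map_sub]
    have h6 : ‖(Submodule.orthogonalProjectionOnto (ℝ ∙ v) (z - y) :
        EuclideanSpace ℝ (Fin d))‖ = ‖Submodule.orthogonalProjectionOnto (ℝ ∙ v) (z - y)‖ :=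
      Submodule.norm_coe _
    rw [h6] at h4
    rw [h5] at h2
    have hsq : ‖z - y‖ ^ 2 ≤ (2 * ‖(P z : K) - P y‖) ^ 2 := by
      nlinarith [h2, h4, norm_nonneg ((P z : K) - P y), norm_nonneg (z - y),
        norm_nonneg (Submodule.orthogonalProjectionOnto (ℝ ∙ v) (z - y))]
    exact (abs_le_of_sq_le_sq' hsq (by positivity)).2
  refine ⟨r, hrpos, ?_⟩
  set Z : Set (EuclideanSpace ℝ (Fin d)) := {y | f y = 0} ∩ ball x r with hZ
  have hanti' : ∀ y ∈ Z, ∀ z ∈ Z, ‖z - y‖ ≤ 2 * ‖(P z : K) - P y‖ := by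
    rintro y ⟨hfy, hy⟩ z ⟨hfz, hz⟩
    exact hanti y hy z hz hfy hfz
  letI : MeasurableSpace K := borel _
  haveI : BorelSpace K := ⟨rfl⟩
  set g : EuclideanSpace ℝ (Fin d) → K := fun z => P z with hg
  set F : K → EuclideanSpace ℝ (Fin d) := Function.invFunOn g Z with hF
  have hZF : Z ⊆ F '' (g '' Z) := by
    intro z hz
    have hmem : ∃ a ∈ Z, g a = g z := ⟨z, hz, rfl⟩
    have h1 : F (g z) ∈ Z := Function.invFunOn_mem hmem
    have h2 : g (F (g z)) = g z := Function.invFunOn_eq hmem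
    have h3 : ‖z - F (g z)‖ ≤ 2 * ‖(P z : K) - P (F (g z))‖ := hanti' _ h1 z hz
    rw [show (P z : K) - P (F (g z)) = 0 by
      rw [show (P (F (g z)) : K) = g z from h2]; simp [hg]] at h3
    simp only [norm_zero, mul_zero] at h3
    have hzz : z = F (g z) := by
      exact sub_eq_zero.1 (norm_le_zero_iff.1 h3)
    exact ⟨g z, ⟨z, hz, rfl⟩, hzz.symm⟩
  have hlip : LipschitzOnWith 2 F (g '' Z) := by
    rw [lipschitzOnWith_iff_dist_le_mul]
    rintro w1 ⟨z1, hz1, rfl⟩ w2 ⟨z2, hz2, rfl⟩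
    have e1 : F (g z1) ∈ Z := Function.invFunOn_mem ⟨z1, hz1, rfl⟩
    have e1' : g (F (g z1)) = g z1 := Function.invFunOn_eq ⟨z1, hz1, rfl⟩
    have e2 : F (g z2) ∈ Z := Function.invFunOn_mem ⟨z2, hz2, rfl⟩
    have e2' : g (F (g z2)) = g z2 := Function.invFunOn_eq ⟨z2, hz2, rfl⟩
    have h3 := hanti' (F (g z2)) e2 (F (g z1)) e1
    rw [dist_eq_norm, dist_eq_norm]
    calc ‖F (g z1) - F (g z2)‖ ≤ 2 * ‖(P (F (g z1)) : K) - P (F (g z2))‖ := h3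
      _ = 2 * ‖g z1 - g z2‖ := by
          rw [show (P (F (g z1)) : K) = g z1 from e1',
            show (P (F (g z2)) : K) = g z2 from e2']
      _ = (2 : ℝ≥0) * ‖g z1 - g z2‖ := by norm_num
  -- bounded image in the hyperplane
  have himg : g '' Z ⊆ closedBall (g x) r := by
    rintro w ⟨z, ⟨_, hzball⟩, rfl⟩
    rw [mem_closedBall, dist_eq_norm]
    have : g z - g x = P (z - x) := by rw [hg]; simp [map_sub]
    rw [this]
    calc ‖P (z - x)‖ ≤ ‖Submodule.orthogonalProjectionOnto K‖ * ‖z - x‖ :=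
          (Submodule.orthogonalProjectionOnto K).le_opNorm _
      _ ≤ 1 * ‖z - x‖ :=
          mul_le_mul_of_nonneg_right (Submodule.orthogonalProjectionOnto_norm_le K) (norm_nonneg _)
      _ = ‖z - x‖ := one_mul _
      _ ≤ r := by rw [← dist_eq_norm]; exact (mem_ball.1 hzball).le
  -- dimension of the hyperplane
  haveI : Fact (Module.finrank ℝ (EuclideanSpace ℝ (Fin d)) = (d - 1) + 1) := ⟨by
    rw [finrank_euclideanSpace_fin]; omega⟩
  have hdimK : Module.finrank ℝ K = d - 1 := Submodule.finrank_orthogonal_span_singleton hvne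
  have hcast : (d : ℝ) - 1 = ((d - 1 : ℕ) : ℝ) := by
    rw [Nat.cast_sub hd]; norm_num
  haveI : ProperSpace K := FiniteDimensional.proper ℝ K
  have hfinK : μH[(d : ℝ) - 1] (g '' Z) < ∞ := by
    rw [hcast, ← hdimK]
    exact lt_of_le_of_lt (measure_mono himg) (isCompact_closedBall _ _).measure_lt_top
  have hd1 : (0:ℝ) ≤ (d:ℝ) - 1 := by
    have : (1:ℝ) ≤ (d:ℝ) := by exact_mod_cast hd
    linarith
  calc μH[(d : ℝ) - 1] Z ≤ μH[(d : ℝ) - 1] (F '' (g '' Z)) := measure_mono hZF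
    _ ≤ (2 : ℝ≥0) ^ ((d:ℝ) - 1) * μH[(d : ℝ) - 1] (g '' Z) :=
        hlip.hausdorffMeasure_image_le hd1
    _ < ∞ := ENNReal.mul_lt_top
        (ENNReal.rpow_lt_top_of_nonneg hd1 ENNReal.coe_ne_top) hfinK


/-- if the Lipschitz hitting time `T` has vanishing tangential
increments on compact subsets of the singular set `S`, which is covered by
countably many `C¹` hypersurfaces, then (given that the lower strata contribute
positive `H^{d-2}` measure for at most countably many times) for almost every
time `t` the level set `S ∩ T⁻¹(t)` has zero `(d-2)`-dimensional Hausdorff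
measure. -/
theorem generic_singular_measure {d : ℕ} (hd : 2 ≤ d)
    (S : Set (EuclideanSpace ℝ (Fin d))) (T : EuclideanSpace ℝ (Fin d) → ℝ)
    (K : NNReal) (hT : LipschitzWith K T)
    (hflat : ∀ Kc : Set (EuclideanSpace ℝ (Fin d)), Kc ⊆ S → IsCompact Kc →
      ∀ ε > (0:ℝ), ∃ δ > (0:ℝ), ∀ x ∈ Kc, ∀ y ∈ Kc, dist x y < δ →
        |T x - T y| ≤ ε * dist x y)
    (M : ℕ → Set (EuclideanSpace ℝ (Fin d)))
    (hM : ∀ n, ∃ f : EuclideanSpace ℝ (Fin d) → ℝ, ContDiff ℝ 1 f ∧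
      ∀ x ∈ M n, f x = 0 ∧ fderiv ℝ f x ≠ 0)
    (hcover : S ⊆ ⋃ n, M n)
    (S₂ : Set (EuclideanSpace ℝ (Fin d))) (hS₂ : S₂ ⊆ S)
    (hS₂count : Set.Countable {t : ℝ | μH[(d:ℝ) - 2] (S₂ ∩ T ⁻¹' {t}) ≠ 0}) :
    ∀ᵐ t : ℝ, μH[(d:ℝ) - 2] (S ∩ T ⁻¹' {t}) = 0 := by
  classical
  -- pointwise flatness of T on S
  have hpt : ∀ x ∈ S, ∀ ε > (0:ℝ), ∃ δ > (0:ℝ), ∀ y ∈ S, dist x y < δ →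
      |T x - T y| ≤ ε * dist x y := by
    intro x hx ε hε
    by_contra hcon
    push_neg at hcon
    choose y hyS hyd hyT using fun n : ℕ => hcon (1/(n+1)) (by positivity)
    have hy_tendsto : Filter.Tendsto y Filter.atTop (nhds x) := by
      rw [tendsto_iff_dist_tendsto_zero]
      refine squeeze_zero (fun n => dist_nonneg) (fun n => ?_)
        tendsto_one_div_add_atTop_nhds_zero_nat
      rw [dist_comm]
      exact (hyd n).le
    have hcpt : IsCompact (insert x (Set.range y)) := hy_tendsto.isCompact_insert_range
    have hsub : insert x (Set.range y) ⊆ S := insert_subset hx (range_subset_iff.2 hyS)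
    obtain ⟨δ, hδ, hflat'⟩ := hflat _ hsub hcpt ε hε
    obtain ⟨n, hn⟩ := exists_nat_one_div_lt hδ
    have h1 := hflat' x (mem_insert _ _) (y n)
      (mem_insert_of_mem _ ⟨n, rfl⟩) (lt_trans (hyd n) hn)
    exact absurd h1 (not_le.2 (hyT n))
  -- flatness strata
  set A : ℕ → ℕ → Set (EuclideanSpace ℝ (Fin d)) := fun m k =>
    {x | x ∈ S ∧ ∀ y ∈ S, dist x y < 1/(k+1) → |T x - T y| ≤ (1/(m+1)) * dist x y}
    with hA
  have hAS : ∀ m k, A m k ⊆ S := fun m k x hx => hx.1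
  have hAmono : ∀ m, Monotone (A m) := by
    intro m k1 k2 hk x hx
    refine ⟨hx.1, fun y hy hdist => hx.2 y hy (hdist.trans_le ?_)⟩
    refine one_div_le_one_div_of_le (by positivity) ?_
    exact_mod_cast add_le_add_left (Nat.cast_le.2 hk) 1
  have hAcover : ∀ m, S ⊆ ⋃ k, A m k := by
    intro m x hx
    obtain ⟨δ, hδ, h⟩ := hpt x hx (1/(m+1)) (by positivity)
    obtain ⟨k, hk⟩ := exists_nat_one_div_lt hδ
    exact mem_iUnion.2 ⟨k, hx, fun y hy hdy => h y hy (hdy.trans hk)⟩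
  -- countable family of pieces with finite H^{d-1}
  have hpiece : ∀ n, ∃ (V : Set (EuclideanSpace ℝ (Fin d)))
      (ρ : EuclideanSpace ℝ (Fin d) → ℝ), V.Countable ∧
      (M n ⊆ ⋃ x ∈ V, ball x (ρ x)) ∧
      ∀ x ∈ V, μH[(d:ℝ)-1] (M n ∩ ball x (ρ x)) < ∞ := by
    intro n
    obtain ⟨f, hf, hfprop⟩ := hM n
    have hx : ∀ x ∈ M n, ∃ r > (0:ℝ), μH[(d:ℝ)-1] ({y | f y = 0} ∩ ball x r) < ∞ :=
      fun x hxM => zeroset_locfin (by omega) f hf x (hfprop x hxM).2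
    choose! ρ hρpos hρfin using hx
    obtain ⟨V, hVsub, hVc, hVcov⟩ := TopologicalSpace.countable_cover_nhdsWithin
      (f := fun x => ball x (ρ x)) (s := M n)
      (fun x hxM => mem_nhdsWithin_of_mem_nhds (ball_mem_nhds x (hρpos x hxM)))
    refine ⟨V, ρ, hVc, hVcov, fun x hxV => ?_⟩
    refine lt_of_le_of_lt (measure_mono ?_) (hρfin x (hVsub hxV))
    exact inter_subset_inter (fun y hy => (hfprop y hy).1) subset_rfl
  choose V ρ hVc hVcov hVfin using hpiece
  -- the bad set
  rw [MeasureTheory.ae_iff]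
  set BadG : Set (EuclideanSpace ℝ (Fin d)) → Set ℝ := fun G =>
    {t : ℝ | μH[(d:ℝ)-2] ((S ∩ G) ∩ T ⁻¹' {t}) ≠ 0} with hBadG
  -- per-piece vanishing
  have hper : ∀ (G : Set (EuclideanSpace ℝ (Fin d))), μH[(d:ℝ)-1] G < ∞ →
      volume (BadG G) = 0 := by
    intro G hGfin
    have hd2 : (0:ℝ) ≤ (d:ℝ) - 2 := by
      have : (2:ℝ) ≤ (d:ℝ) := by exact_mod_cast hd
      linarith
    -- decompose the bad set by levels
    have hlev : BadG G ⊆ ⋃ j : ℕ, {t : ℝ | (j:ℝ≥0∞)⁻¹ < μH[(d:ℝ)-2] ((S ∩ G) ∩ T ⁻¹' {t})} := by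
      intro t ht
      obtain ⟨j, hj⟩ := ENNReal.exists_inv_nat_lt ht
      exact mem_iUnion.2 ⟨j, hj⟩
    refine measure_mono_null hlev (measure_iUnion_null fun j => ?_)
    set a : ℝ≥0∞ := (j:ℝ≥0∞)⁻¹ with ha
    rcases Nat.eq_zero_or_pos j with hj0 | hjpos
    · subst hj0
      simp only [Nat.cast_zero, ENNReal.inv_zero, ha]
      convert measure_empty (μ := (volume : Measure ℝ))
      rw [eq_empty_iff_forall_notMem]
      intro t ht
      exact absurd (mem_setOf_eq ▸ ht) (by simp)
    have hane : a ≠ 0 := by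
      rw [ha]
      simp
    -- the bound for each flatness level m
    have hbound : ∀ m : ℕ,
        a * volume {t : ℝ | a < μH[(d:ℝ)-2] ((S ∩ G) ∩ T ⁻¹' {t})} ≤
        2 * ENNReal.ofReal (1/(m+1)) * μH[(d:ℝ)-1] G := by
      intro m
      have hSG : S ∩ G = ⋃ k, (A m k ∩ G) := by
        apply le_antisymm
        · intro z hz
          obtain ⟨k, hk⟩ := mem_iUnion.1 (hAcover m hz.1)
          exact mem_iUnion.2 ⟨k, hk, hz.2⟩
        · exact iUnion_subset fun k => inter_subset_inter (hAS m k) subset_rfl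
      have hseteq : {t : ℝ | a < μH[(d:ℝ)-2] ((S ∩ G) ∩ T ⁻¹' {t})} =
          ⋃ k, {t : ℝ | a < μH[(d:ℝ)-2] ((A m k ∩ G) ∩ T ⁻¹' {t})} := by
        ext t
        have hUn : (S ∩ G) ∩ T ⁻¹' {t} = ⋃ k, (A m k ∩ G) ∩ T ⁻¹' {t} := by
          rw [hSG, iUnion_inter]
        have hmon : Monotone fun k => (A m k ∩ G) ∩ T ⁻¹' {t} := fun k1 k2 hk =>
          inter_subset_inter (inter_subset_inter (hAmono m hk) subset_rfl) subset_rfl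
        simp only [mem_setOf_eq, mem_iUnion]
        rw [hUn, hmon.measure_iUnion, lt_iSup_iff]
      rw [hseteq]
      have hmonot : Monotone fun k =>
          {t : ℝ | a < μH[(d:ℝ)-2] ((A m k ∩ G) ∩ T ⁻¹' {t})} := by
        intro k1 k2 hk t ht
        exact lt_of_lt_of_le ht (measure_mono
          (inter_subset_inter (inter_subset_inter (hAmono m hk) subset_rfl) subset_rfl))
      rw [hmonot.measure_iUnion, ENNReal.mul_iSup]
      refine iSup_le fun k => ?_
      have heil := eilenberg (s := (d:ℝ)-2) hd2 (A m k ∩ G) T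
        (ε := 1/(m+1)) (r0 := 1/(k+1)) (by positivity) (by positivity)
        (fun x hx y hy hdist => hx.1.2 y (hAS m k hy.1) hdist) a
      have hexp : (d:ℝ) - 2 + 1 = (d:ℝ) - 1 := by ring
      rw [hexp] at heil
      refine heil.trans ?_
      exact mul_le_mul_right (measure_mono inter_subset_right) _
    -- let m → ∞
    set CG := μH[(d:ℝ)-1] G with hCG
    have htend : Filter.Tendsto (fun m : ℕ => 2 * ENNReal.ofReal (1/(m+1)) * CG)
        Filter.atTop (nhds 0) := by
      have h0 : Filter.Tendsto (fun m : ℕ => (1:ℝ)/(m+1)) Filter.atTop (nhds 0) :=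
        tendsto_one_div_add_atTop_nhds_zero_nat
      have h1 : Filter.Tendsto (fun m : ℕ => ENNReal.ofReal (1/(m+1)))
          Filter.atTop (nhds 0) := by
        rw [← ENNReal.ofReal_zero]
        exact (ENNReal.continuous_ofReal.tendsto 0).comp h0
      have h2 := ENNReal.Tendsto.const_mul (a := 2) h1 (Or.inr (by norm_num))
      rw [mul_zero] at h2
      have h3 := ENNReal.Tendsto.mul_const (b := CG) h2 (Or.inr hGfin.ne)
      rwa [zero_mul] at h3
    have hle : a * volume {t : ℝ | a < μH[(d:ℝ)-2] ((S ∩ G) ∩ T ⁻¹' {t})} ≤ 0 :=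
      ge_of_tendsto htend (Filter.Eventually.of_forall hbound)
    have hz := nonpos_iff_eq_zero.1 hle
    rcases mul_eq_zero.1 hz with h | h
    · exact absurd h hane
    · exact h
  -- assembling the countable cover
  have hGle : ∀ t : ℝ,
      (∀ n, ∀ x ∈ V n, μH[(d:ℝ)-2] ((S ∩ (M n ∩ ball x (ρ n x))) ∩ T ⁻¹' {t}) = 0) →
      μH[(d:ℝ)-2] (S ∩ T ⁻¹' {t}) = 0 := by
    intro t h0
    have hsub : S ∩ T ⁻¹' {t} ⊆
        ⋃ n, ⋃ x ∈ V n, (S ∩ (M n ∩ ball x (ρ n x))) ∩ T ⁻¹' {t} := by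
      rintro z ⟨hzS, hzT⟩
      obtain ⟨n, hn⟩ := mem_iUnion.1 (hcover hzS)
      obtain ⟨x, hxV, hxball⟩ := by
        have := hVcov n hn
        simpa using this
      exact mem_iUnion.2 ⟨n, mem_iUnion₂.2 ⟨x, hxV, ⟨hzS, hn, hxball⟩, hzT⟩⟩
    refine measure_mono_null hsub (measure_iUnion_null fun n => ?_)
    exact (measure_biUnion_null_iff (hVc n)).2 fun x hx => h0 n x hx
  have hBadsub : {t : ℝ | μH[(d:ℝ)-2] (S ∩ T ⁻¹' {t}) ≠ 0} ⊆
      ⋃ n, ⋃ x ∈ V n, BadG (M n ∩ ball x (ρ n x)) := by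
    intro t ht
    by_contra hcon
    simp only [mem_iUnion, hBadG, mem_setOf_eq, not_exists, not_not] at hcon
    exact ht (hGle t fun n x hx => hcon n x hx)
  refine measure_mono_null ?_ (measure_iUnion_null fun n =>
    (measure_biUnion_null_iff (hVc n)).2 fun x hx => hper _ (hVfin n x hx))
  intro t ht
  exact hBadsub ht
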